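/- (Soundness of closed Su.) Let m ≥ 1, α ∈ (0,1], ℓ > 0, and p_1,…,p_m ∈ [0,1]. For nonempty S ⊆ [m] let p_{i:S} denote the i-th smallest value among {p_j : j ∈ S} and define the Simes p-value p_S = min_{1 ≤ i ≤ |S|} |S|·p_{i:S}/i, and set e_S = 1/max(ℓ·p_S, α). Let p_(1) ≤ … ≤ p_(m) be the globally sorted values, R^(r) a set of indices of the r smallest values (R^(0) = ∅), and let R^Su = R^(r*) with r* = max({r ∈ [m] : p_(r) ≤ α·r/(ℓ·m)} ∪ {0}) (the BH rejection set at level α/ℓ). Then for every nonempty S ⊆ [m], e_S ≥ |S ∩ R^Su| / (α · max(|R^Su|, 1)). -/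

import Mathlib

/-- The i-th smallest value among {p_j : j ∈ S} (1-indexed). -/
noncomputable def orderStat {m : ℕ} (p : Fin m → ℝ) (S : Finset (Fin m)) (i : ℕ) : ℝ :=
  ((S.val.map p).sort (· ≤ ·)).getD (i - 1) 0

/-- The Simes p-value p_S = min_{1 ≤ i ≤ |S|} |S|·p_{i:S}/i (set to 1 for S = ∅). -/
noncomputable def simes {m : ℕ} (p : Fin m → ℝ) (S : Finset (Fin m)) : ℝ :=
  if h : S.Nonempty then
    (Finset.Icc 1 S.card).inf'
      (Finset.nonempty_Icc.mpr (Finset.one_le_card.mpr h))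
      (fun i => (S.card : ℝ) * orderStat p S i / (i : ℝ))
  else 1

open scoped Classical

lemma order_le_of_many_small {s t : Multiset ℝ} (hts : t ≤ s) {B : ℝ}
    (ht : ∀ x ∈ t, x ≤ B) {k : ℕ} (hk : k < Multiset.card s) (hkt : k + 1 ≤ Multiset.card t) :
    (s.sort (· ≤ ·)).getD k 0 ≤ B := by
  classical
  set l := s.sort (· ≤ ·) with hl
  have hsl : (l : Multiset ℝ) = s := s.sort_eq _
  have hlen : l.length = Multiset.card s := s.length_sort _
  have hsorted : l.Pairwise (· ≤ ·) := s.pairwise_sort _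
  by_contra hcon
  push_neg at hcon
  have hk' : k < l.length := hlen ▸ hk
  rw [List.getD_eq_getElem l 0 hk'] at hcon
  have hfle : t ≤ Multiset.filter (fun x => x ≤ B) s :=
    Multiset.le_filter.mpr ⟨hts, ht⟩
  have hcard : k + 1 ≤ Multiset.card (Multiset.filter (fun x => x ≤ B) s) :=
    le_trans hkt (Multiset.card_le_card hfle)
  rw [← hsl] at hcard
  have hcard' : k + 1 ≤ (l.filter (fun x => decide (x ≤ B))).length := by
    simpa using hcard
  have hdropnil : (l.drop k).filter (fun x => decide (x ≤ B)) = [] := by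
    rw [List.filter_eq_nil_iff]
    intro x hx
    have hd : l.drop k = l[k] :: l.drop (k+1) := List.drop_eq_getElem_cons hk'
    rw [hd] at hx
    have hle : l[k] ≤ x := by
      rcases List.mem_cons.mp hx with h1 | h1
      · exact h1 ▸ le_refl _
      · have hso : (l.drop k).Pairwise (· ≤ ·) := hsorted.sublist (List.drop_sublist _ _)
        rw [hd] at hso
        exact List.rel_of_pairwise_cons hso h1
    simp only [decide_eq_true_eq]
    intro hxB
    linarith
  have hfin : (l.filter (fun x => decide (x ≤ B))).length ≤ k := by
    have : l.filter (fun x => decide (x ≤ B)) =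
        (l.take k).filter (fun x => decide (x ≤ B)) ++ (l.drop k).filter (fun x => decide (x ≤ B)) := by
      rw [← List.filter_append, List.take_append_drop]
    rw [this, hdropnil, List.append_nil]
    exact le_trans (List.length_filter_le _ _) (by simp)
  omega

/-- Soundness of closed Su: with local e-values e_S = 1/max(ℓ·p_S, α) built
from Simes p-values, the BH rejection set at level α/ℓ satisfies
e_S ≥ |S ∩ R^Su|/(α·max(|R^Su|,1)) for every nonempty S. -/
theorem statement_13 (m : ℕ) (hm : 1 ≤ m) (α : ℝ) (hα : α ∈ Set.Ioc (0 : ℝ) 1)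
    (ℓ : ℝ) (hℓ : 0 < ℓ)
    (p : Fin m → ℝ) (hp : ∀ i, p i ∈ Set.Icc (0 : ℝ) 1)
    -- σ sorts the p-values in increasing order
    (σ : Equiv.Perm (Fin m)) (hσ : ∀ i j : Fin m, i ≤ j → p (σ i) ≤ p (σ j))
    -- pord r = p_(r), the r-th smallest value, for 1 ≤ r ≤ m
    (pord : ℕ → ℝ) (hpord : ∀ (r : ℕ) (hr : r < m), pord (r + 1) = p (σ ⟨r, hr⟩))
    (rstar : ℕ)
    (hrstar : IsGreatest
      {r : ℕ | r = 0 ∨ (1 ≤ r ∧ r ≤ m ∧ pord r ≤ α * (r : ℝ) / (ℓ * (m : ℝ)))} rstar)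
    -- R^Su: indices of the r* smallest p-values (BH at level α/ℓ)
    (RSu : Finset (Fin m))
    (hRSu : RSu = Finset.image (fun j => σ j)
      (Finset.univ.filter fun j : Fin m => (j : ℕ) < rstar)) :
    ∀ S : Finset (Fin m), S.Nonempty →
      ((S ∩ RSu).card : ℝ) / (α * ((max RSu.card 1 : ℕ) : ℝ)) ≤
        1 / max (ℓ * simes p S) α := by
  classical
  obtain ⟨hα0, hα1⟩ := hα
  intro S hS
  have hM0 : 0 < max (ℓ * simes p S) α := lt_of_lt_of_le hα0 (le_max_right _ _)
  by_cases hTne : (S ∩ RSu).Nonempty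
  swap
  · rw [Finset.not_nonempty_iff_eq_empty] at hTne
    rw [hTne]
    simp only [Finset.card_empty, Nat.cast_zero, zero_div]
    exact div_nonneg zero_le_one hM0.le
  · -- facts about rstar
    obtain ⟨j0, hj0⟩ := hTne
    have hj0R : j0 ∈ RSu := (Finset.mem_inter.mp hj0).2
    have hr : 1 ≤ rstar ∧ rstar ≤ m ∧ pord rstar ≤ α * (rstar : ℝ) / (ℓ * (m : ℝ)) := by
      rcases hrstar.1 with h0 | h
      · exfalso
        rw [hRSu, h0] at hj0R
        simp at hj0R
      · exact h
    obtain ⟨h1, hrm, hbound⟩ := hr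
    have hr1 : rstar - 1 < m := by omega
    have hpr : pord rstar = p (σ ⟨rstar - 1, hr1⟩) := by
      have := hpord (rstar - 1) hr1
      rwa [Nat.sub_add_cancel h1] at this
    have hmem : ∀ j ∈ RSu, p j ≤ α * (rstar : ℝ) / (ℓ * (m : ℝ)) := by
      intro j hj
      rw [hRSu] at hj
      obtain ⟨i, hi, rfl⟩ := Finset.mem_image.mp hj
      have hi' : (i : ℕ) < rstar := (Finset.mem_filter.mp hi).2
      have hle : p (σ i) ≤ pord rstar := by
        rw [hpr]
        exact hσ i ⟨rstar - 1, hr1⟩ (by simp [Fin.le_def]; omega)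
      linarith
    -- card of RSu
    have hFeq : Finset.univ.filter (fun j : Fin m => (j : ℕ) < rstar) =
        Finset.attachFin (Finset.range rstar)
          (fun a ha => lt_of_lt_of_le (Finset.mem_range.mp ha) hrm) := by
      ext j
      simp [Finset.mem_attachFin]
    have hcard : RSu.card = rstar := by
      rw [hRSu, Finset.card_image_of_injective _ σ.injective, hFeq,
        Finset.card_attachFin, Finset.card_range]
    set k := (S ∩ RSu).card with hk
    have hk1 : 1 ≤ k := Finset.card_pos.mpr ⟨j0, hj0⟩
    have hkS : k ≤ S.card := Finset.card_le_card Finset.inter_subset_left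
    have hkr : k ≤ rstar := hcard ▸ Finset.card_le_card Finset.inter_subset_right
    -- order statistic bound
    have horder : orderStat p S k ≤ α * (rstar : ℝ) / (ℓ * (m : ℝ)) := by
      unfold orderStat
      have hk' : k - 1 < Multiset.card (S.val.map p) := by
        rw [Multiset.card_map]
        exact lt_of_lt_of_le (by omega) hkS
      have := order_le_of_many_small
        (s := S.val.map p) (t := ((S ∩ RSu).val.map p))
        (Multiset.map_le_map (Finset.val_le_iff.mpr Finset.inter_subset_left))
        (B := α * (rstar : ℝ) / (ℓ * (m : ℝ)))
        (by
          intro x hx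
          obtain ⟨j, hj, rfl⟩ := Multiset.mem_map.mp hx
          exact hmem j (Finset.mem_inter.mp hj).2)
        hk'
        (by
          rw [Multiset.card_map]
          show k - 1 + 1 ≤ (S ∩ RSu).card
          omega)
      exact this
    have hord0 : 0 ≤ orderStat p S k := by
      unfold orderStat
      set l := (S.val.map p).sort (· ≤ ·) with hl
      have hk' : k - 1 < l.length := by
        rw [Multiset.length_sort, Multiset.card_map]
        exact lt_of_lt_of_le (by omega) hkS
      rw [List.getD_eq_getElem l 0 hk']
      have hmeml : l[k-1] ∈ (S.val.map p) := by
        rw [← Multiset.mem_sort (· ≤ ·)]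
        exact List.getElem_mem hk'
      obtain ⟨j, _, hj⟩ := Multiset.mem_map.mp hmeml
      rw [← hj]
      exact (hp j).1
    -- simes bound
    have hsimes : simes p S ≤ (S.card : ℝ) * orderStat p S k / (k : ℝ) := by
      unfold simes
      rw [dif_pos hS]
      exact Finset.inf'_le _ (Finset.mem_Icc.mpr ⟨hk1, hkS⟩)
    -- finish
    have hmax : (max RSu.card 1 : ℕ) = rstar := by
      rw [hcard]; omega
    rw [hmax, div_le_div_iff₀ (by positivity) hM0, one_mul]
    have hk0 : (0:ℝ) < (k : ℝ) := by exact_mod_cast hk1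
    rcases max_cases (ℓ * simes p S) α with ⟨hmx, _⟩ | ⟨hmx, _⟩
    · rw [hmx]
      have hstep : (k : ℝ) * (ℓ * simes p S) ≤ ℓ * ((S.card : ℝ) * orderStat p S k) := by
        have : (k : ℝ) * (ℓ * simes p S) ≤ (k : ℝ) * (ℓ * ((S.card : ℝ) * orderStat p S k / (k : ℝ))) :=
          mul_le_mul_of_nonneg_left (mul_le_mul_of_nonneg_left hsimes hℓ.le) hk0.le
        calc (k : ℝ) * (ℓ * simes p S)
            ≤ (k : ℝ) * (ℓ * ((S.card : ℝ) * orderStat p S k / (k : ℝ))) := this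
          _ = ℓ * ((S.card : ℝ) * orderStat p S k) := by field_simp
      have hSm : (S.card : ℝ) ≤ (m : ℝ) := by
        have := Finset.card_le_univ S
        simp only [Finset.card_univ, Fintype.card_fin] at this
        exact_mod_cast this
      have hm0 : (0:ℝ) < (m : ℝ) := by exact_mod_cast hm
      have hstep2 : (S.card : ℝ) * orderStat p S k ≤ (m : ℝ) * (α * (rstar : ℝ) / (ℓ * (m : ℝ))) :=
        mul_le_mul hSm horder hord0 hm0.le
      have hstep3 : ℓ * ((m : ℝ) * (α * (rstar : ℝ) / (ℓ * (m : ℝ)))) = α * (rstar : ℝ) := by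
        field_simp
      calc (k : ℝ) * (ℓ * simes p S) ≤ ℓ * ((S.card : ℝ) * orderStat p S k) := hstep
        _ ≤ ℓ * ((m : ℝ) * (α * (rstar : ℝ) / (ℓ * (m : ℝ)))) :=
            mul_le_mul_of_nonneg_left hstep2 hℓ.le
        _ = α * (rstar : ℝ) := hstep3
    · rw [hmx]
      have : (k : ℝ) ≤ (rstar : ℝ) := by exact_mod_cast hkr
      nlinarith
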